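/- For i = 1, 2 let εᵢ ∈ {1, −1} and xᵢ ∈ ℤ, and let Mᵢ = (0 εᵢ; 1 xᵢ) ∈ GL₂ℤ. Then M₁ and M₂ are conjugate in PGL₂ℤ — i.e., there exists P ∈ GL₂ℤ with P M₁ P⁻¹ = M₂ or P M₁ P⁻¹ = −M₂ — if and only if ε₁ = ε₂ and |x₁| = |x₂|. -/
import Mathlib


open Matrix

abbrev GL2Z := GL (Fin 2) ℤ

lemma conj_det (P M : GL2Z) :
    ((P * M * P⁻¹ : GL2Z) : Matrix (Fin 2) (Fin 2) ℤ).det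
      = ((M : GL2Z) : Matrix (Fin 2) (Fin 2) ℤ).det := by
  rw [Units.val_mul, Units.val_mul, Matrix.det_mul, Matrix.det_mul]
  have h : ((P : Matrix (Fin 2) (Fin 2) ℤ)).det * ((↑P⁻¹ : Matrix (Fin 2) (Fin 2) ℤ)).det = 1 := by
    rw [← Matrix.det_mul, ← Units.val_mul, mul_inv_cancel, Units.val_one, Matrix.det_one]
  linear_combination ((M : Matrix (Fin 2) (Fin 2) ℤ)).det * h

lemma conj_trace (P M : GL2Z) :
    ((P * M * P⁻¹ : GL2Z) : Matrix (Fin 2) (Fin 2) ℤ).trace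
      = ((M : GL2Z) : Matrix (Fin 2) (Fin 2) ℤ).trace := by
  rw [Units.val_mul, Units.val_mul, Matrix.trace_mul_cycle]
  have h : (↑P⁻¹ : Matrix (Fin 2) (Fin 2) ℤ) * (P : Matrix (Fin 2) (Fin 2) ℤ) = 1 := by
    rw [← Units.val_mul, inv_mul_cancel, Units.val_one]
  rw [h, one_mul]

theorem conj_in_PGL2_iff (ε₁ ε₂ x₁ x₂ : ℤ)
    (hε₁ : ε₁ = 1 ∨ ε₁ = -1) (hε₂ : ε₂ = 1 ∨ ε₂ = -1)
    (M₁ M₂ : GL2Z)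
    (hM₁ : (M₁ : Matrix (Fin 2) (Fin 2) ℤ) = !![0, ε₁; 1, x₁])
    (hM₂ : (M₂ : Matrix (Fin 2) (Fin 2) ℤ) = !![0, ε₂; 1, x₂]) :
    (∃ P : GL2Z, P * M₁ * P⁻¹ = M₂ ∨ P * M₁ * P⁻¹ = -M₂) ↔
      (ε₁ = ε₂ ∧ |x₁| = |x₂|) := by
  constructor
  · rintro ⟨P, h | h⟩
    · have hd := conj_det P M₁
      have ht := conj_trace P M₁
      rw [h, hM₂] at hd ht
      rw [hM₁] at hd ht
      simp [Matrix.det_fin_two_of, Matrix.trace_fin_two_of] at hd ht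
      exact ⟨by linarith, by rw [ht]⟩
    · have hd := conj_det P M₁
      have ht := conj_trace P M₁
      rw [h, Units.val_neg, hM₂] at hd ht
      rw [hM₁] at hd ht
      rw [Matrix.det_neg] at hd
      simp [Matrix.det_fin_two_of, Matrix.trace_fin_two_of] at hd ht
      exact ⟨by linarith, by rw [show x₁ = -x₂ by linarith, abs_neg]⟩
  · rintro ⟨rfl, hx⟩
    rcases abs_eq_abs.mp hx with rfl | h
    · refine ⟨1, Or.inl ?_⟩
      have : M₁ = M₂ := Units.ext (hM₁.trans hM₂.symm)
      simp [this]
    · -- x₁ = -x₂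
      have hJ : (!![1, 0; 0, -1] : Matrix (Fin 2) (Fin 2) ℤ) * !![1, 0; 0, -1] = 1 := by
        ext i j
        fin_cases i <;> fin_cases j <;>
          simp [Matrix.mul_apply, Fin.sum_univ_two]
      set P : GL2Z := ⟨!![1, 0; 0, -1], !![1, 0; 0, -1], hJ, hJ⟩ with hP
      refine ⟨P, Or.inr ?_⟩
      have hPP : P * P = 1 := Units.ext hJ
      have hinv : P⁻¹ = P := inv_eq_of_mul_eq_one_right hPP
      rw [hinv]
      apply Units.ext
      rw [Units.val_mul, Units.val_mul, Units.val_neg, hM₁, hM₂]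
      have hPv : (P : Matrix (Fin 2) (Fin 2) ℤ) = !![1, 0; 0, -1] := rfl
      rw [hPv]
      subst h
      ext i j
      fin_cases i <;> fin_cases j <;>
        simp [Matrix.mul_apply, Fin.sum_univ_two]
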